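/- Let n be a positive integer and let A = {a_1, a_2, …, a_n} be a multiset of positive integers with a_1 + a_2 + … + a_n = n². Then A is an extremal multi Skolem set (i.e., the set {1, 2, …, 2n} can be partitioned into n pairs (s_i, t_i) whose differences t_i − s_i form the multiset A) if and only if there exists a permutation π of {1, …, n} such that for every k ∈ {1, …, 2n−1}, the entry d_k of the diagonal X-ray d(π) equals the multiplicity of k in A (equivalently, the Toeplitz characteristic of π equals the nondecreasing arrangement of A). -/
import Mathlib

/-- The multiset of all endpoints of the pairs `(s i, t i)`. -/
def pairsMultiset (n : ℕ) (s t : Fin n → ℕ) : Multiset ℕ :=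
  (Finset.univ : Finset (Fin n)).val.bind fun i => {s i, t i}

/-- The pairs `(s i, t i)` form a partition of `{1, 2, …, 2n}`. -/
def IsPartitionOfIcc (n : ℕ) (s t : Fin n → ℕ) : Prop :=
  pairsMultiset n s t = Multiset.map (· + 1) (Multiset.range (2 * n))

/-- The `k`-th entry (`k = 1, …, 2n-1`) of the diagonal (Toeplitz) X-ray of a
permutation `π` of `{1, …, n}` (encoded 0-based on `Fin n`):
`d_k = #{i : i - π(i) = n - k}`. -/
def diagXray (n : ℕ) (π : Equiv.Perm (Fin n)) (k : ℤ) : ℕ :=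
  (Finset.univ.filter fun i : Fin n =>
    ((i : ℕ) : ℤ) - ((π i : ℕ) : ℤ) = (n : ℤ) - k).card

lemma bind_pair {α : Type*} (u : Multiset α) (f g : α → ℕ) :
    (u.bind fun i => ({f i, g i} : Multiset ℕ)) = u.map f + u.map g := by
  induction u using Multiset.induction_on with
  | empty => simp
  | cons a s ih =>
      rw [Multiset.cons_bind, ih, Multiset.map_cons, Multiset.map_cons,
        Multiset.insert_eq_cons, ← Multiset.singleton_add, ← Multiset.singleton_add,
        ← Multiset.singleton_add]
      abel

lemma count_map_card {n : ℕ} (f : Fin n → ℕ) (k : ℕ) :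
    Multiset.count k (Multiset.map f (Finset.univ : Finset (Fin n)).val) =
      (Finset.univ.filter fun i => k = f i).card := by
  rw [Multiset.count_map]
  rfl

lemma card_filter_comp_equiv {n : ℕ} (e : Fin n ≃ Fin n) (p : Fin n → Prop)
    [DecidablePred p] :
    (Finset.univ.filter fun i => p (e i)).card = (Finset.univ.filter p).card := by
  have himg : (Finset.univ.filter fun i => p (e i)).image e = Finset.univ.filter p := by
    ext b
    simp only [Finset.mem_image, Finset.mem_filter, Finset.mem_univ, true_and]
    constructor
    · rintro ⟨x, hx, rfl⟩; exact hx
    · intro hb; exact ⟨e.symm b, by simpa using hb, by simp⟩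
  rw [← himg, Finset.card_image_of_injective _ e.injective]

lemma sum_odd (m : ℕ) : ∑ i ∈ Finset.range m, (2 * (i : ℤ) + 1) = (m : ℤ) ^ 2 := by
  induction m with
  | zero => simp
  | succ k ih => rw [Finset.sum_range_succ, ih]; push_cast; ring

lemma abs_sum_key (n : ℕ) :
    ∑ j ∈ Finset.range (2 * n), |2 * ((j : ℤ) + 1) - (2 * n + 1)| = 2 * (n : ℤ) ^ 2 := by
  have hsplit := Finset.sum_Ico_consecutive (fun j => |2 * ((j : ℤ) + 1) - (2 * n + 1)|)
    (Nat.zero_le n) (by omega : n ≤ 2 * n)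
  rw [← Nat.Ico_zero_eq_range, ← hsplit]
  have h1 : ∑ j ∈ Finset.Ico 0 n, |2 * ((j : ℤ) + 1) - (2 * n + 1)| = (n : ℤ) ^ 2 := by
    rw [Nat.Ico_zero_eq_range]
    rw [← Finset.sum_range_reflect]
    rw [← sum_odd n]
    apply Finset.sum_congr rfl
    intro j hj
    rw [Finset.mem_range] at hj
    rw [abs_of_nonpos (by omega)]
    have : ((n - 1 - j : ℕ) : ℤ) = (n : ℤ) - 1 - j := by omega
    rw [this]; ring
  have h2 : ∑ j ∈ Finset.Ico n (2 * n), |2 * ((j : ℤ) + 1) - (2 * n + 1)| = (n : ℤ) ^ 2 := by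
    rw [Finset.sum_Ico_eq_sum_range]
    have : 2 * n - n = n := by omega
    rw [this, ← sum_odd n]
    apply Finset.sum_congr rfl
    intro j hj
    rw [abs_of_nonneg (by omega)]
    push_cast; ring
  rw [h1, h2]; ring

theorem stmt1 (n : ℕ) (hn : 0 < n) (a : Fin n → ℕ)
    (ha_pos : ∀ i, 0 < a i) (ha_sum : ∑ i, a i = n ^ 2) :
    (∃ s t : Fin n → ℕ, IsPartitionOfIcc n s t ∧ (∀ i, s i < t i) ∧
        Multiset.map (fun i => t i - s i) (Finset.univ : Finset (Fin n)).val =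
          Multiset.map a (Finset.univ : Finset (Fin n)).val) ↔
      ∃ π : Equiv.Perm (Fin n), ∀ k : ℕ, 1 ≤ k → k ≤ 2 * n - 1 →
        diagXray n π k =
          Multiset.count k (Multiset.map a (Finset.univ : Finset (Fin n)).val) := by
  constructor
  · rintro ⟨s, t, hpart, hlt, hdiff⟩
    rw [IsPartitionOfIcc] at hpart
    unfold pairsMultiset at hpart
    rw [bind_pair] at hpart
    -- bounds on endpoints
    have hmem : ∀ x ∈ Multiset.map s (Finset.univ : Finset (Fin n)).val +
        Multiset.map t (Finset.univ : Finset (Fin n)).val, 1 ≤ x ∧ x ≤ 2 * n := by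
      intro x hx
      rw [hpart] at hx
      simp only [Multiset.mem_map, Multiset.mem_range] at hx
      obtain ⟨j, hj, rfl⟩ := hx
      omega
    have hs_mem : ∀ i, 1 ≤ s i ∧ s i ≤ 2 * n := fun i =>
      hmem _ (Multiset.mem_add.mpr (Or.inl (Multiset.mem_map.mpr ⟨i, Finset.mem_univ_val _, rfl⟩)))
    have ht_mem : ∀ i, 1 ≤ t i ∧ t i ≤ 2 * n := fun i =>
      hmem _ (Multiset.mem_add.mpr (Or.inr (Multiset.mem_map.mpr ⟨i, Finset.mem_univ_val _, rfl⟩)))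
    -- nodup, injectivity
    have hnodup : (Multiset.map s (Finset.univ : Finset (Fin n)).val +
        Multiset.map t (Finset.univ : Finset (Fin n)).val).Nodup := by
      rw [hpart]
      exact (Multiset.nodup_range _).map (fun x y h => by omega)
    obtain ⟨hs_nd, ht_nd, -⟩ := Multiset.nodup_add.mp hnodup
    have hs_inj : Function.Injective s := fun x y h =>
      Multiset.inj_on_of_nodup_map hs_nd x (Finset.mem_univ_val _) y (Finset.mem_univ_val _) h
    have ht_inj : Function.Injective t := fun x y h =>
      Multiset.inj_on_of_nodup_map ht_nd x (Finset.mem_univ_val _) y (Finset.mem_univ_val _) h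
    -- sum of differences
    have hdsum : ∑ i, (t i - s i) = n ^ 2 := by
      rw [← ha_sum]
      exact congrArg Multiset.sum hdiff
    have hdsumZ : ∑ i : Fin n, ((t i : ℤ) - s i) = (n : ℤ) ^ 2 := by
      have : ∑ i : Fin n, ((t i : ℤ) - s i) = ∑ i : Fin n, ((t i - s i : ℕ) : ℤ) := by
        apply Finset.sum_congr rfl
        intro i _
        have := hlt i
        omega
      rw [this, ← Nat.cast_sum, hdsum]
      push_cast; ring
    -- abs sum over all endpoints
    have habs : ∑ i : Fin n, (|2 * ((s i : ℕ) : ℤ) - (2 * n + 1)| +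
        |2 * ((t i : ℕ) : ℤ) - (2 * n + 1)|) = 2 * (n : ℤ) ^ 2 := by
      have hc := congrArg (fun m : Multiset ℕ =>
        (m.map (fun x : ℕ => |2 * (x : ℤ) - (2 * n + 1)|)).sum) hpart
      simp only [Multiset.map_add, Multiset.sum_add, Multiset.map_map,
        Function.comp] at hc
      have hL : ∀ f : Fin n → ℕ,
          ((Finset.univ : Finset (Fin n)).val.map
            (fun i => |2 * ((f i : ℕ) : ℤ) - (2 * n + 1)|)).sum =
          ∑ i : Fin n, |2 * ((f i : ℕ) : ℤ) - (2 * n + 1)| := by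
        intro f; rw [Finset.sum_eq_multiset_sum]
      have hR : ((Multiset.range (2 * n)).map
          (fun j => |2 * (((j + 1 : ℕ)) : ℤ) - (2 * n + 1)|)).sum =
          ∑ j ∈ Finset.range (2 * n), |2 * ((j : ℤ) + 1) - (2 * n + 1)| := by
        rw [Finset.sum_eq_multiset_sum, Finset.range_val]
        exact congrArg Multiset.sum (Multiset.map_congr rfl (fun j _ => by norm_cast))
      rw [hL s, hL t, hR, abs_sum_key] at hc
      rw [Finset.sum_add_distrib]
      linarith
    -- equality case
    have hle : ∀ i ∈ (Finset.univ : Finset (Fin n)), 2 * ((t i : ℤ) - s i) ≤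
        |2 * ((s i : ℕ) : ℤ) - (2 * n + 1)| + |2 * ((t i : ℕ) : ℤ) - (2 * n + 1)| := by
      intro i _
      have h1 := le_abs_self (2 * ((t i : ℕ) : ℤ) - (2 * n + 1))
      have h2 := neg_abs_le (2 * ((s i : ℕ) : ℤ) - (2 * n + 1))
      linarith
    have hsums : ∑ i : Fin n, 2 * ((t i : ℤ) - s i) =
        ∑ i : Fin n, (|2 * ((s i : ℕ) : ℤ) - (2 * n + 1)| +
          |2 * ((t i : ℕ) : ℤ) - (2 * n + 1)|) := by
      rw [habs, ← Finset.mul_sum, hdsumZ]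
    have heqs := (Finset.sum_eq_sum_iff_of_le hle).mp hsums
    have hbounds : ∀ i : Fin n, s i ≤ n ∧ n + 1 ≤ t i := by
      intro i
      have h := heqs i (Finset.mem_univ i)
      have h1 := hs_mem i
      have h2 := ht_mem i
      have h3 := hlt i
      rcases abs_cases (2 * ((s i : ℕ) : ℤ) - (2 * n + 1)) with ⟨ha1, ha2⟩ | ⟨ha1, ha2⟩ <;>
        rcases abs_cases (2 * ((t i : ℕ) : ℤ) - (2 * n + 1)) with ⟨hb1, hb2⟩ | ⟨hb1, hb2⟩ <;>
        rw [ha1, hb1] at h <;> omega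
    -- build the permutation
    have hσlt : ∀ i, s i - 1 < n := fun i => by have := (hbounds i).1; have := (hs_mem i).1; omega
    have hτlt : ∀ i, t i - (n + 1) < n := fun i => by
      have := (hbounds i).2; have := (ht_mem i).2; omega
    set σ : Fin n → Fin n := fun i => ⟨s i - 1, hσlt i⟩ with hσdef
    set τ : Fin n → Fin n := fun i => ⟨t i - (n + 1), hτlt i⟩ with hτdef
    have hσinj : Function.Injective σ := by
      intro x y h
      apply hs_inj
      have := (hs_mem x).1; have := (hs_mem y).1
      have h' : s x - 1 = s y - 1 := congrArg Fin.val h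
      omega
    have hτinj : Function.Injective τ := by
      intro x y h
      apply ht_inj
      have := (hbounds x).2; have := (hbounds y).2
      have h' : t x - (n + 1) = t y - (n + 1) := congrArg Fin.val h
      omega
    have hσbij := hσinj.bijective_of_finite
    have hτbij := hτinj.bijective_of_finite
    set eσ := Equiv.ofBijective σ hσbij with heσ
    set eτ := Equiv.ofBijective τ hτbij with heτ
    refine ⟨eσ.symm.trans eτ, ?_⟩
    intro k hk1 hk2
    have hπσ : ∀ i, (eσ.symm.trans eτ) (σ i) = τ i := by
      intro i
      simp only [Equiv.trans_apply]
      have : σ i = eσ i := rfl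
      rw [this, Equiv.symm_apply_apply]
      rfl
    rw [diagXray]
    rw [← card_filter_comp_equiv eσ]
    have hfc : (Finset.univ.filter fun i =>
        (((eσ i : Fin n) : ℕ) : ℤ) - (((eσ.symm.trans eτ) (eσ i) : ℕ) : ℤ) = (n : ℤ) - k) =
        (Finset.univ.filter fun i => k = t i - s i) := by
      apply Finset.filter_congr
      intro i _
      have heq : eσ i = σ i := rfl
      rw [heq, hπσ i]
      have h1 := (hs_mem i).1
      have h2 := (hbounds i).2
      have h3 := hlt i
      have hσv : ((σ i : ℕ) : ℤ) = ((s i - 1 : ℕ) : ℤ) := rfl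
      have hτv : ((τ i : ℕ) : ℤ) = ((t i - (n + 1) : ℕ) : ℤ) := rfl
      rw [hσv, hτv]
      constructor
      · intro h; omega
      · intro h; omega
    rw [hfc, ← count_map_card, hdiff]
  · rintro ⟨π, hπ⟩
    refine ⟨fun i => (i : ℕ) + 1, fun i => n + (π i : ℕ) + 1, ?_, ?_, ?_⟩
    · rw [IsPartitionOfIcc]
      unfold pairsMultiset
      rw [bind_pair]
      have hnd1 : (Multiset.map (fun i : Fin n => (i : ℕ) + 1)
          (Finset.univ : Finset (Fin n)).val).Nodup :=
        Finset.univ.nodup.map (fun x y h => Fin.val_injective (by omega))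
      have hnd2 : (Multiset.map (fun i : Fin n => n + (π i : ℕ) + 1)
          (Finset.univ : Finset (Fin n)).val).Nodup :=
        Finset.univ.nodup.map (fun x y h => π.injective (Fin.val_injective (by omega)))
      have hndL : (Multiset.map (fun i : Fin n => (i : ℕ) + 1)
            (Finset.univ : Finset (Fin n)).val +
          Multiset.map (fun i : Fin n => n + (π i : ℕ) + 1)
            (Finset.univ : Finset (Fin n)).val).Nodup := by
        rw [Multiset.nodup_add]
        refine ⟨hnd1, hnd2, ?_⟩
        rw [Multiset.disjoint_left]
        intro x hx1 hx2
        simp only [Multiset.mem_map] at hx1 hx2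
        obtain ⟨i, -, rfl⟩ := hx1
        obtain ⟨j, -, hj⟩ := hx2
        have := i.isLt
        omega
      have hndR : (Multiset.map (· + 1) (Multiset.range (2 * n))).Nodup :=
        (Multiset.nodup_range _).map (fun x y h => by omega)
      rw [Multiset.Nodup.ext hndL hndR]
      intro x
      simp only [Multiset.mem_add, Multiset.mem_map, Multiset.mem_range]
      constructor
      · rintro (⟨i, -, rfl⟩ | ⟨i, -, rfl⟩)
        · exact ⟨i, by omega, rfl⟩
        · exact ⟨n + (π i : ℕ), by have := (π i).isLt; omega, rfl⟩
      · rintro ⟨j, hj, rfl⟩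
        by_cases hjn : j < n
        · exact Or.inl ⟨⟨j, hjn⟩, Finset.mem_univ_val _, rfl⟩
        · refine Or.inr ⟨π.symm ⟨j - n, by omega⟩, Finset.mem_univ_val _, ?_⟩
          rw [Equiv.apply_symm_apply]
          simp only []
          omega
    · intro i
      show (i : ℕ) + 1 < n + (π i : ℕ) + 1
      have := i.isLt; omega
    · -- differences
      have hdd : ∀ i : Fin n, (n + (π i : ℕ) + 1) - ((i : ℕ) + 1) = n + (π i : ℕ) - i := by
        intro i; omega
      have hdiag : ∀ k : ℕ, diagXray n π k = Multiset.count k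
          (Multiset.map (fun i : Fin n => (n + (π i : ℕ) + 1) - ((i : ℕ) + 1))
            (Finset.univ : Finset (Fin n)).val) := by
        intro k
        rw [count_map_card, diagXray]
        apply congrArg
        apply Finset.filter_congr
        intro i _
        have h1 := i.isLt
        have h2 := (π i).isLt
        constructor
        · intro h; omega
        · intro h; omega
      have hfilter : Multiset.map (fun i : Fin n => (n + (π i : ℕ) + 1) - ((i : ℕ) + 1))
            (Finset.univ : Finset (Fin n)).val =
          Multiset.filter (fun k => 1 ≤ k ∧ k ≤ 2 * n - 1)
            (Multiset.map a (Finset.univ : Finset (Fin n)).val) := by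
        ext k
        rw [Multiset.count_filter]
        by_cases hk : 1 ≤ k ∧ k ≤ 2 * n - 1
        · rw [if_pos hk, ← hπ k hk.1 hk.2, hdiag k]
        · rw [if_neg hk]
          rw [Multiset.count_eq_zero]
          intro hmem
          obtain ⟨i, -, hi⟩ := Multiset.mem_map.mp hmem
          have h1 := i.isLt
          have h2 := (π i).isLt
          omega
      have hcard : Multiset.card (Multiset.filter (fun k => 1 ≤ k ∧ k ≤ 2 * n - 1)
          (Multiset.map a (Finset.univ : Finset (Fin n)).val)) =
          Multiset.card (Multiset.map a (Finset.univ : Finset (Fin n)).val) := by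
        rw [← hfilter]
        simp
      rw [hfilter]
      exact Multiset.eq_of_le_of_card_le (Multiset.filter_le _ _) (le_of_eq hcard.symm)
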